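/- Let A be an m×n complex matrix of rank r with singular value decomposition A = U₁Σ₁V₁*, and B an m×n complex matrix of rank s with singular value decomposition B = Ũ₁Σ̃₁Ṽ₁*, and let E = B − A. Then ‖B† − A†‖_F² = ‖Ũ₂*U₁Σ₁⁻¹‖_F² + ‖Σ̃₁⁻¹Ṽ₁*V₂‖_F² + ‖A†EB†‖_F². -/

import Mathlib

open Matrix

/-- The square of the Frobenius norm of a complex matrix. -/
noncomputable def frobSq {α β : Type*} [Fintype α] [Fintype β] (M : Matrix α β ℂ) : ℝ :=
  ∑ i, ∑ j, ‖M i j‖ ^ 2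

/-- The spectral norm (ℓ²-operator norm) of a complex matrix. -/
noncomputable def spec {α β : Type*} [Fintype α] [Fintype β] [DecidableEq β]
    (M : Matrix α β ℂ) : ℝ :=
  ‖LinearMap.toContinuousLinearMap (Matrix.toEuclideanLin M)‖

/-- `X` is the Moore–Penrose inverse of `M` (the four Penrose equations). -/
def IsMoorePenrose {α β : Type*} [Fintype α] [Fintype β]
    (M : Matrix α β ℂ) (X : Matrix β α ℂ) : Prop :=
  M * X * M = M ∧ X * M * X = X ∧ (M * X)ᴴ = M * X ∧ (X * M)ᴴ = X * M

lemma frobSq_eq_re_trace {α β : Type*} [Fintype α] [Fintype β] (M : Matrix α β ℂ) :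
    frobSq M = (Matrix.trace (Mᴴ * M)).re := by
  simp only [frobSq, Matrix.trace, Matrix.diag, Matrix.mul_apply,
    Matrix.conjTranspose_apply, Complex.re_sum]
  rw [Finset.sum_comm]
  congr 1; ext i; congr 1; ext j
  rw [show star (M j i) = (starRingEnd ℂ) (M j i) from rfl, ← Complex.normSq_eq_conj_mul_self,
    Complex.ofReal_re, Complex.sq_norm]

lemma frobSq_conjTranspose {α β : Type*} [Fintype α] [Fintype β] (M : Matrix α β ℂ) :
    frobSq Mᴴ = frobSq M := by
  simp only [frobSq, Matrix.conjTranspose_apply]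
  rw [Finset.sum_comm]
  simp

lemma frobSq_neg {α β : Type*} [Fintype α] [Fintype β] (M : Matrix α β ℂ) :
    frobSq (-M) = frobSq M := by
  simp [frobSq]

lemma frobSq_add_of_trace_zero {α β : Type*} [Fintype α] [Fintype β]
    (X Y : Matrix α β ℂ) (h : Matrix.trace (Xᴴ * Y) = 0) :
    frobSq (X + Y) = frobSq X + frobSq Y := by
  have h2 : Matrix.trace (Yᴴ * X) = 0 := by
    have : (Xᴴ * Y)ᴴ = Yᴴ * X := by simp [Matrix.conjTranspose_mul]
    rw [← this, Matrix.trace_conjTranspose, h, star_zero]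
  simp only [frobSq_eq_re_trace, Matrix.conjTranspose_add, Matrix.add_mul, Matrix.mul_add,
    Matrix.trace_add, h, h2]
  ring_nf
  simp

lemma frobSq_mul_left {α β γ : Type*} [Fintype α] [Fintype β] [Fintype γ] [DecidableEq β]
    (W : Matrix α β ℂ) (M : Matrix β γ ℂ) (h : Wᴴ * W = 1) :
    frobSq (W * M) = frobSq M := by
  rw [frobSq_eq_re_trace, frobSq_eq_re_trace, Matrix.conjTranspose_mul]
  rw [show Mᴴ * Wᴴ * (W * M) = Mᴴ * (Wᴴ * W) * M by
    rw [Matrix.mul_assoc, Matrix.mul_assoc, Matrix.mul_assoc], h, Matrix.mul_one]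

lemma frobSq_mul_right {α β γ : Type*} [Fintype α] [Fintype β] [Fintype γ] [DecidableEq β]
    (M : Matrix α β ℂ) (W : Matrix γ β ℂ) (h : Wᴴ * W = 1) :
    frobSq (M * Wᴴ) = frobSq M := by
  rw [← frobSq_conjTranspose (M * Wᴴ), Matrix.conjTranspose_mul, Matrix.conjTranspose_conjTranspose,
    frobSq_mul_left _ _ h, frobSq_conjTranspose]

lemma unitary_blocks {p q t : Type*} [Fintype p] [Fintype q] [Fintype t]
    [DecidableEq q] [DecidableEq t]
    (W₁ : Matrix p q ℂ) (W₂ : Matrix p t ℂ)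
    (h : (fromCols W₁ W₂)ᴴ * fromCols W₁ W₂ = 1) :
    W₁ᴴ * W₁ = 1 ∧ W₁ᴴ * W₂ = 0 ∧ W₂ᴴ * W₁ = 0 ∧ W₂ᴴ * W₂ = 1 := by
  rw [conjTranspose_fromCols_eq_fromRows_conjTranspose, fromRows_mul_fromCols,
    ← fromBlocks_one] at h
  obtain ⟨h1, h2, h3, h4⟩ := fromBlocks_inj.mp h
  exact ⟨h1, h2, h3, h4⟩

lemma unitary_sum {p q t : Type*} [Fintype p] [Fintype q] [Fintype t] [DecidableEq p]
    (W₁ : Matrix p q ℂ) (W₂ : Matrix p t ℂ)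
    (h : fromCols W₁ W₂ * (fromCols W₁ W₂)ᴴ = 1) :
    W₁ * W₁ᴴ + W₂ * W₂ᴴ = 1 := by
  rwa [conjTranspose_fromCols_eq_fromRows_conjTranspose, fromCols_mul_fromRows] at h

lemma cancel_assoc {a b c : Type*} [Fintype a] [Fintype b] [Fintype c] [DecidableEq a]
    (P : Matrix a b ℂ) (Q : Matrix b a ℂ) (M : Matrix a c ℂ) (h : P * Q = 1) :
    P * (Q * M) = M := by rw [← Matrix.mul_assoc, h, Matrix.one_mul]

lemma orth_left {a b c d e : Type*} [Fintype a] [Fintype b] [Fintype c] [Fintype d] [Fintype e]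
    (W₁ : Matrix a b ℂ) (W₂ : Matrix a c ℂ) (P : Matrix b d ℂ) (Q : Matrix c e ℂ)
    (h : W₁ᴴ * W₂ = 0) :
    (W₁ * P)ᴴ * (W₂ * Q) = 0 := by
  rw [Matrix.conjTranspose_mul, Matrix.mul_assoc, ← Matrix.mul_assoc W₁ᴴ, h,
    Matrix.zero_mul, Matrix.mul_zero]

lemma trace_orth {a b c d : Type*} [Fintype a] [Fintype b] [Fintype c] [Fintype d]
    (W₁ : Matrix a b ℂ) (W₂ : Matrix a c ℂ) (P : Matrix d b ℂ) (Q : Matrix d c ℂ)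
    (h : W₂ᴴ * W₁ = 0) :
    Matrix.trace ((P * W₁ᴴ)ᴴ * (Q * W₂ᴴ)) = 0 := by
  rw [Matrix.conjTranspose_mul, Matrix.conjTranspose_conjTranspose]
  rw [show W₁ * Pᴴ * (Q * W₂ᴴ) = (W₁ * (Pᴴ * Q)) * W₂ᴴ by simp only [Matrix.mul_assoc]]
  rw [Matrix.trace_mul_comm, ← Matrix.mul_assoc, h, Matrix.zero_mul, Matrix.trace_zero]

theorem stmt16 {m n r s : ℕ}
    (A B : Matrix (Fin m) (Fin n) ℂ)
    (hrankA : A.rank = r) (hrankB : B.rank = s)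
    (σ : Fin r → ℝ) (hσmono : Antitone σ) (hσpos : ∀ i, 0 < σ i)
    (τ : Fin s → ℝ) (hτmono : Antitone τ) (hτpos : ∀ i, 0 < τ i)
    (U₁ : Matrix (Fin m) (Fin r) ℂ) (U₂ : Matrix (Fin m) (Fin (m - r)) ℂ)
    (V₁ : Matrix (Fin n) (Fin r) ℂ) (V₂ : Matrix (Fin n) (Fin (n - r)) ℂ)
    (tU₁ : Matrix (Fin m) (Fin s) ℂ) (tU₂ : Matrix (Fin m) (Fin (m - s)) ℂ)
    (tV₁ : Matrix (Fin n) (Fin s) ℂ) (tV₂ : Matrix (Fin n) (Fin (n - s)) ℂ)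
    (hU : (fromCols U₁ U₂)ᴴ * fromCols U₁ U₂ = 1
        ∧ fromCols U₁ U₂ * (fromCols U₁ U₂)ᴴ = 1)
    (hV : (fromCols V₁ V₂)ᴴ * fromCols V₁ V₂ = 1
        ∧ fromCols V₁ V₂ * (fromCols V₁ V₂)ᴴ = 1)
    (htU : (fromCols tU₁ tU₂)ᴴ * fromCols tU₁ tU₂ = 1
        ∧ fromCols tU₁ tU₂ * (fromCols tU₁ tU₂)ᴴ = 1)
    (htV : (fromCols tV₁ tV₂)ᴴ * fromCols tV₁ tV₂ = 1
        ∧ fromCols tV₁ tV₂ * (fromCols tV₁ tV₂)ᴴ = 1)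
    (hAsvd : A = U₁ * diagonal (fun i => (σ i : ℂ)) * V₁ᴴ)
    (hBsvd : B = tU₁ * diagonal (fun i => (τ i : ℂ)) * tV₁ᴴ)
    (E : Matrix (Fin m) (Fin n) ℂ) (hE : E = B - A)
    (Adag Bdag : Matrix (Fin n) (Fin m) ℂ)
    (hAdag : Adag = V₁ * diagonal (fun i => ((σ i : ℂ))⁻¹) * U₁ᴴ)
    (hBdag : Bdag = tV₁ * diagonal (fun i => ((τ i : ℂ))⁻¹) * tU₁ᴴ) :
    frobSq (Bdag - Adag)
      = frobSq (tU₂ᴴ * U₁ * diagonal (fun i => ((σ i : ℂ))⁻¹))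
        + frobSq (diagonal (fun i => ((τ i : ℂ))⁻¹) * tV₁ᴴ * V₂)
        + frobSq (Adag * E * Bdag) := by
  obtain ⟨hU11, hU12, hU21, hU22⟩ := unitary_blocks U₁ U₂ hU.1
  obtain ⟨hV11, hV12, hV21, hV22⟩ := unitary_blocks V₁ V₂ hV.1
  obtain ⟨htU11, htU12, htU21, htU22⟩ := unitary_blocks tU₁ tU₂ htU.1
  obtain ⟨htV11, htV12, htV21, htV22⟩ := unitary_blocks tV₁ tV₂ htV.1
  have hVsum := unitary_sum V₁ V₂ hV.2
  have htUsum := unitary_sum tU₁ tU₂ htU.2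
  set Dσ := diagonal (fun i => ((σ i : ℂ))⁻¹) with hDσdef
  set Dτ := diagonal (fun i => ((τ i : ℂ))⁻¹) with hDτdef
  set Sσ := diagonal (fun i => ((σ i : ℂ))) with hSσdef
  set Sτ := diagonal (fun i => ((τ i : ℂ))) with hSτdef
  have hσne : ∀ i, (σ i : ℂ) ≠ 0 := fun i => by exact_mod_cast (hσpos i).ne'
  have hτne : ∀ i, (τ i : ℂ) ≠ 0 := fun i => by exact_mod_cast (hτpos i).ne'
  have hDσS : Dσ * Sσ = 1 := by
    rw [hDσdef, hSσdef, diagonal_mul_diagonal]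
    have : (fun i => ((σ i : ℂ))⁻¹ * (σ i : ℂ)) = fun _ => (1 : ℂ) :=
      funext fun i => inv_mul_cancel₀ (hσne i)
    rw [this, diagonal_one]
  have hSτD : Sτ * Dτ = 1 := by
    rw [hDτdef, hSτdef, diagonal_mul_diagonal]
    have : (fun i => (τ i : ℂ) * ((τ i : ℂ))⁻¹) = fun _ => (1 : ℂ) :=
      funext fun i => mul_inv_cancel₀ (hτne i)
    rw [this, diagonal_one]
  have hDσH : Dσᴴ = Dσ := by
    rw [hDσdef, diagonal_conjTranspose]
    have : (star fun i => ((σ i : ℂ))⁻¹) = fun i => ((σ i : ℂ))⁻¹ := by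
      funext i
      simp [Pi.star_apply, ← Complex.ofReal_inv, Complex.star_def, Complex.conj_ofReal]
    rw [this]
  have hDτH : Dτᴴ = Dτ := by
    rw [hDτdef, diagonal_conjTranspose]
    have : (star fun i => ((τ i : ℂ))⁻¹) = fun i => ((τ i : ℂ))⁻¹ := by
      funext i
      simp [Pi.star_apply, ← Complex.ofReal_inv, Complex.star_def, Complex.conj_ofReal]
    rw [this]
  have hAA : Adag * A = V₁ * V₁ᴴ := by
    rw [hAdag, hAsvd]
    simp only [Matrix.mul_assoc]
    rw [cancel_assoc _ _ _ hU11, cancel_assoc _ _ _ hDσS]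
  have hBB : B * Bdag = tU₁ * tU₁ᴴ := by
    rw [hBdag, hBsvd]
    simp only [Matrix.mul_assoc]
    rw [cancel_assoc _ _ _ htV11, cancel_assoc _ _ _ hSτD]
  set X := -(Adag * E * Bdag) with hXdef
  set Y := V₂ * (V₂ᴴ * Bdag) with hYdef
  set Z := -(Adag * (tU₂ * tU₂ᴴ)) with hZdef
  have hX1 : X = V₁ * (-(Dσ * (U₁ᴴ * (E * (tV₁ * (Dτ * tU₁ᴴ)))))) := by
    rw [hXdef, hAdag, hBdag]
    simp only [Matrix.mul_assoc, Matrix.mul_neg]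
  have hX2 : X = (-(V₁ * (Dσ * (U₁ᴴ * (E * (tV₁ * Dτ)))))) * tU₁ᴴ := by
    rw [hXdef, hAdag, hBdag]
    simp only [Matrix.mul_assoc, Matrix.neg_mul]
  have hZ1 : Z = V₁ * (-(Dσ * (U₁ᴴ * (tU₂ * tU₂ᴴ)))) := by
    rw [hZdef, hAdag]
    simp only [Matrix.mul_assoc, Matrix.mul_neg]
  have hZ2 : Z = (-(V₁ * (Dσ * (U₁ᴴ * tU₂)))) * tU₂ᴴ := by
    rw [hZdef, hAdag]
    simp only [Matrix.mul_assoc, Matrix.neg_mul]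
  have hdecomp : Bdag - Adag = X + Y + Z := by
    have e1 : Adag * E * Bdag = Adag * (tU₁ * tU₁ᴴ) - V₁ * V₁ᴴ * Bdag := by
      rw [hE, Matrix.mul_sub, Matrix.sub_mul, Matrix.mul_assoc Adag B Bdag, hBB, ← hAA]
    have h1 : V₁ * V₁ᴴ * Bdag + V₂ * (V₂ᴴ * Bdag) = Bdag := by
      rw [← Matrix.mul_assoc, ← Matrix.add_mul, hVsum, Matrix.one_mul]
    have h2 : Adag * (tU₁ * tU₁ᴴ) + Adag * (tU₂ * tU₂ᴴ) = Adag := by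
      rw [← Matrix.mul_add, htUsum, Matrix.mul_one]
    calc Bdag - Adag
        = (V₁ * V₁ᴴ * Bdag + V₂ * (V₂ᴴ * Bdag))
            - (Adag * (tU₁ * tU₁ᴴ) + Adag * (tU₂ * tU₂ᴴ)) := by rw [h1, h2]
      _ = X + Y + Z := by rw [hXdef, hYdef, hZdef, e1, neg_sub]; abel
  have htrXY : Matrix.trace (Xᴴ * Y) = 0 := by
    rw [hX1, hYdef, orth_left _ _ _ _ hV12, Matrix.trace_zero]
  have htrYZ : Matrix.trace (Yᴴ * Z) = 0 := by
    rw [hYdef, hZ1, orth_left _ _ _ _ hV21, Matrix.trace_zero]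
  have htrXZ : Matrix.trace (Xᴴ * Z) = 0 := by
    rw [hX2, hZ2]
    exact trace_orth tU₁ tU₂ _ _ htU21
  have htrZ : Matrix.trace ((X + Y)ᴴ * Z) = 0 := by
    rw [Matrix.conjTranspose_add, Matrix.add_mul, Matrix.trace_add, htrXZ, htrYZ, add_zero]
  have hfX : frobSq X = frobSq (Adag * E * Bdag) := by rw [hXdef, frobSq_neg]
  have hfY : frobSq Y = frobSq (Dτ * tV₁ᴴ * V₂) := by
    rw [hYdef, frobSq_mul_left _ _ hV22, hBdag]
    rw [show V₂ᴴ * (tV₁ * Dτ * tU₁ᴴ) = (V₂ᴴ * (tV₁ * Dτ)) * tU₁ᴴ by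
      simp only [Matrix.mul_assoc]]
    rw [frobSq_mul_right _ _ htU11, ← frobSq_conjTranspose (Dτ * tV₁ᴴ * V₂)]
    congr 1
    simp only [Matrix.conjTranspose_mul, Matrix.conjTranspose_conjTranspose, hDτH,
      Matrix.mul_assoc]
  have hfZ : frobSq Z = frobSq (tU₂ᴴ * U₁ * Dσ) := by
    rw [hZ1, frobSq_mul_left _ _ hV11, frobSq_neg]
    rw [show Dσ * (U₁ᴴ * (tU₂ * tU₂ᴴ)) = (Dσ * (U₁ᴴ * tU₂)) * tU₂ᴴ by
      simp only [Matrix.mul_assoc]]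
    rw [frobSq_mul_right _ _ htU22, ← frobSq_conjTranspose (tU₂ᴴ * U₁ * Dσ)]
    congr 1
    simp only [Matrix.conjTranspose_mul, Matrix.conjTranspose_conjTranspose, hDσH,
      Matrix.mul_assoc]
  rw [hdecomp, frobSq_add_of_trace_zero (X + Y) Z htrZ, frobSq_add_of_trace_zero X Y htrXY,
    hfX, hfY, hfZ]
  ring
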